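/- (Sun, special case) For every prime p ≥ 5, p·B_{2(p-1)} ≡ -(p-1) + 2·p·B_{p-1} mod p² (in Z_p); consequently the second p-adic digit satisfies (p·B_{2p-2})₁ ≡ 2·(p·B_{p-1})₁ - 1 mod p. -/

import Mathlib

open Finset

section Aux
variable {p : ℕ} [hp : Fact p.Prime]

/-- binomial expansion truncated mod y² -/
lemma bin_aux (x y : ℤ) (n : ℕ) :
    y ^ 2 ∣ (x + y) ^ (n + 1) - x ^ (n + 1) - (n + 1) * x ^ n * y := by
  induction n with
  | zero => simp
  | succ n ih =>
    have h : (x + y) ^ (n + 2) - x ^ (n + 2) - (↑(n + 2) : ℤ) * x ^ (n + 1) * y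
        = (x + y) * ((x + y) ^ (n + 1) - x ^ (n + 1) - (↑(n + 1) : ℤ) * x ^ n * y)
          + ((n : ℤ) + 1) * x ^ n * y ^ 2 := by push_cast; ring
    calc y ^ 2 ∣ (x + y) * ((x + y) ^ (n + 1) - x ^ (n + 1) - (↑(n + 1) : ℤ) * x ^ n * y)
          + ((n : ℤ) + 1) * x ^ n * y ^ 2 :=
        dvd_add (ih.mul_left _) (Dvd.intro_left _ rfl)
      _ = _ := h.symm

lemma sum_decomp (N c : ℕ) (f : ℕ → ℤ) :
    ∑ k ∈ range (N * c), f k = ∑ b ∈ range c, ∑ a ∈ range N, f (N * b + a) := by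
  induction c with
  | zero => simp
  | succ c ih =>
    rw [Nat.mul_succ, Finset.sum_range_add, ih, sum_range_succ]

/-- p^m divides p * (∑_{k<p^m} k^n) -/
lemma S_dvd (n m : ℕ) : (p : ℤ) ^ m ∣ p * ∑ k ∈ range (p ^ m), (k : ℤ) ^ n := by
  induction m with
  | zero => simp
  | succ m ih =>
    have hdec : ∑ k ∈ range (p ^ (m + 1)), (k : ℤ) ^ n
        = ∑ b ∈ range p, ∑ a ∈ range (p ^ m), ((p ^ m * b + a : ℕ) : ℤ) ^ n := by
      rw [pow_succ, sum_decomp]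
    rcases Nat.eq_zero_or_pos n with hn | hn
    · subst hn
      simp only [pow_zero, sum_const, card_range, nsmul_eq_mul, mul_one]
      push_cast
      exact Dvd.intro_left _ rfl
    obtain ⟨n', rfl⟩ : ∃ n', n = n' + 1 := ⟨n - 1, (Nat.succ_pred_eq_of_pos hn).symm⟩
    set N : ℤ := ((p : ℤ) ^ m) with hN
    set g : ℕ → ℕ → ℤ := fun b a =>
      ((p ^ m * b + a : ℕ) : ℤ) ^ (n' + 1) - (a : ℤ) ^ (n' + 1)
        - (↑(n' + 1) : ℤ) * (a : ℤ) ^ n' * (N * b) with hg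
    -- each g b a is divisible by N^2
    have key : ∀ b a : ℕ, N ^ 2 ∣ g b a := by
      intro b a
      obtain ⟨t, ht⟩ := bin_aux (a : ℤ) (N * b) n'
      refine ⟨(b : ℤ) ^ 2 * t, ?_⟩
      have hc : ((p ^ m * b + a : ℕ) : ℤ) = (a : ℤ) + N * b := by push_cast [hN]; ring
      simp only [hg, hc]
      push_cast
      linear_combination ht
    have hsplit : ∑ b ∈ range p, ∑ a ∈ range (p ^ m), ((p ^ m * b + a : ℕ) : ℤ) ^ (n' + 1)
        = p * (∑ a ∈ range (p ^ m), (a : ℤ) ^ (n' + 1))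
          + N * (∑ b ∈ range p, ∑ a ∈ range (p ^ m), ((↑(n' + 1) : ℤ) * (a : ℤ) ^ n' * b))
          + ∑ b ∈ range p, ∑ a ∈ range (p ^ m), g b a := by
      have step : ∀ b ∈ range p, ∀ a ∈ range (p ^ m),
          ((p ^ m * b + a : ℕ) : ℤ) ^ (n' + 1)
            = (a : ℤ) ^ (n' + 1) + N * ((↑(n' + 1) : ℤ) * (a : ℤ) ^ n' * b) + g b a := by
        intro b _ a _; simp only [hg]; ring
      rw [sum_congr rfl fun b hb => sum_congr rfl fun a ha =>
        step b hb a ha]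
      simp only [Finset.sum_add_distrib, ← Finset.mul_sum, Finset.sum_const, card_range,
        nsmul_eq_mul]
    rw [hdec, hsplit]
    obtain ⟨w, hw⟩ := ih
    obtain ⟨v, hv⟩ : N ^ 2 ∣ ∑ b ∈ range p, ∑ a ∈ range (p ^ m), g b a :=
      Finset.dvd_sum fun b _ => Finset.dvd_sum fun a _ => key b a
    rw [mul_add, mul_add, hw, hv]
    have h1 : ((p : ℤ)) ^ (m + 1) ∣ (p : ℤ) * (N * w) := ⟨w, by rw [hN]; ring⟩
    have h2 : ((p : ℤ)) ^ (m + 1) ∣ (p : ℤ) *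
        (N * ∑ b ∈ range p, ∑ a ∈ range (p ^ m), ((↑(n' + 1) : ℤ) * (a : ℤ) ^ n' * b)) :=
      ⟨∑ b ∈ range p, ∑ a ∈ range (p ^ m), ((↑(n' + 1) : ℤ) * (a : ℤ) ^ n' * b),
        by rw [hN]; ring⟩
    have h3 : ((p : ℤ)) ^ (m + 1) ∣ (p : ℤ) * (N ^ 2 * v) :=
      ⟨N * v, by rw [hN]; ring⟩
    exact dvd_add (dvd_add h1 h2) h3

/-- Faulhaber in ℚ_[p] -/
lemma faulhaber_padic (n N : ℕ) :
    (∑ k ∈ range N, ((k : ℚ_[p])) ^ n)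
      = ∑ i ∈ range (n + 1), ((bernoulli i : ℚ) : ℚ_[p]) * ((n + 1).choose i : ℚ_[p])
          * (N : ℚ_[p]) ^ (n + 1 - i) / ((n + 1 : ℕ) : ℚ_[p]) := by
  have h := congrArg (fun q : ℚ => (q : ℚ_[p])) (sum_range_pow N n)
  push_cast at h ⊢
  simpa using h

lemma norm_natCast_le_one (k : ℕ) : ‖((k : ℚ_[p]))‖ ≤ 1 := by
  have := Padic.norm_int_le_one (p := p) (k : ℤ)
  simpa using this

lemma norm_natCast_eq_one {k : ℕ} (hk : ¬ p ∣ k) : ‖((k : ℚ_[p]))‖ = 1 := by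
  have h1 : ¬ ((p : ℤ) ∣ (k : ℤ)) := by exact_mod_cast hk
  have h2 := (Padic.norm_intCast_lt_one_iff (p := p) (k := (k : ℤ))).not.mpr h1
  have h3 := Padic.norm_int_le_one (p := p) (k : ℤ)
  push_cast at h2 h3
  exact le_antisymm h3 (not_lt.mp h2)

lemma norm_sum_le_padic {s : Finset ℕ} {f : ℕ → ℚ_[p]} {C : ℝ} (hC : 0 ≤ C)
    (h : ∀ i ∈ s, ‖f i‖ ≤ C) : ‖∑ i ∈ s, f i‖ ≤ C :=
  IsUltrametricDist.norm_sum_le_of_forall_le_of_nonneg hC h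

/-- extraction of p-power factor -/
lemma exists_padicInt (k : ℕ) (x : ℚ_[p]) (h : ‖x‖ ≤ (p : ℝ) ^ (-(k : ℤ))) :
    ∃ w : ℤ_[p], x = (p : ℚ_[p]) ^ k * w := by
  have hp0 : (p : ℚ_[p]) ≠ 0 := Nat.cast_ne_zero.mpr hp.out.ne_zero
  have hpk : (p : ℚ_[p]) ^ k ≠ 0 := pow_ne_zero _ hp0
  have hy : ‖x / (p : ℚ_[p]) ^ k‖ ≤ 1 := by
    rw [norm_div, Padic.norm_p_pow]
    have hppos : (0:ℝ) < (p : ℝ) ^ (-(k:ℤ)) := zpow_pos (by exact_mod_cast hp.out.pos) _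
    rw [div_le_one (by simpa [Padic.norm_p_pow] using hppos)]
    simpa using h
  exact ⟨⟨x / (p : ℚ_[p]) ^ k, hy⟩, by field_simp⟩

/-- weak von Staudt–Clausen: ‖B_n‖_p ≤ p -/
lemma bernoulli_norm_le (n : ℕ) : ‖((bernoulli n : ℚ) : ℚ_[p])‖ ≤ (p : ℝ) := by
  induction n using Nat.strong_induction_on with
  | _ n IH =>
  have hp1 : (1:ℝ) < p := by exact_mod_cast hp.out.one_lt
  have hp0R : (0:ℝ) < p := lt_trans one_pos hp1
  have hpne : (p:ℝ) ≠ 0 := ne_of_gt hp0R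
  set a := (n+1).factorization p with ha
  set m := a + 1 with hm
  have hc0 : ¬ p ∣ (n+1) / p ^ a := Nat.not_dvd_ordCompl hp.out (Nat.succ_ne_zero n)
  have hsplit : p ^ a * ((n+1) / p ^ a) = n + 1 :=
    Nat.ordProj_mul_ordCompl_eq_self (n+1) p
  have hnorm_n1 : ‖((n + 1 : ℕ) : ℚ_[p])‖ = (p:ℝ) ^ (-(a:ℤ)) := by
    conv_lhs => rw [← hsplit]
    push_cast
    rw [norm_mul, Padic.norm_p_pow, norm_natCast_eq_one hc0, mul_one]
  have hnormN : ‖(((p ^ m : ℕ)) : ℚ_[p])‖ = (p:ℝ) ^ (-(m:ℤ)) := by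
    rw [show ((p ^ m : ℕ) : ℚ_[p]) = (p : ℚ_[p]) ^ m by push_cast; ring,
      Padic.norm_p_pow]
  -- Faulhaber
  have hF := faulhaber_padic (p := p) n (p ^ m)
  rw [sum_range_succ] at hF
  have hne : ((n + 1 : ℕ) : ℚ_[p]) ≠ 0 := Nat.cast_ne_zero.mpr (Nat.succ_ne_zero n)
  have hlast : ((bernoulli n : ℚ) : ℚ_[p]) * ((n + 1).choose n : ℚ_[p])
      * ((p ^ m : ℕ) : ℚ_[p]) ^ (n + 1 - n) / ((n + 1 : ℕ) : ℚ_[p])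
      = ((bernoulli n : ℚ) : ℚ_[p]) * ((p ^ m : ℕ) : ℚ_[p]) := by
    rw [Nat.choose_succ_self_right, show n + 1 - n = 1 from by omega, pow_one]
    have hne' : ((n : ℚ_[p]) + 1) ≠ 0 := by exact_mod_cast hne
    push_cast
    rw [div_eq_iff hne']
    ring
  rw [hlast] at hF
  -- bound on the power sum
  have hS : ‖∑ k ∈ range (p ^ m), ((k : ℚ_[p])) ^ n‖ ≤ (p:ℝ) ^ (-(a:ℤ)) := by
    obtain ⟨w, hw⟩ := S_dvd (p := p) n m
    have hcast : (p : ℚ_[p]) * ∑ k ∈ range (p ^ m), ((k : ℚ_[p])) ^ n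
        = (p : ℚ_[p]) ^ m * ((w : ℤ) : ℚ_[p]) := by
      have := congrArg (fun z : ℤ => ((z : ℚ_[p]))) hw
      push_cast at this
      simpa using this
    have h1 : ‖(p : ℚ_[p]) * ∑ k ∈ range (p ^ m), ((k : ℚ_[p])) ^ n‖ ≤ (p:ℝ) ^ (-(m:ℤ)) := by
      rw [hcast, norm_mul, Padic.norm_p_pow]
      calc (p:ℝ) ^ (-(m:ℤ)) * ‖((w : ℤ) : ℚ_[p])‖ ≤ (p:ℝ) ^ (-(m:ℤ)) * 1 := by
            refine mul_le_mul_of_nonneg_left (Padic.norm_int_le_one w) ?_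
            positivity
        _ = (p:ℝ) ^ (-(m:ℤ)) := mul_one _
    rw [norm_mul, Padic.norm_p] at h1
    have h2 : ‖∑ k ∈ range (p ^ m), ((k : ℚ_[p])) ^ n‖ ≤ (p:ℝ) * (p:ℝ) ^ (-(m:ℤ)) := by
      have h3 := mul_le_mul_of_nonneg_left h1 (le_of_lt hp0R)
      rwa [← mul_assoc, mul_inv_cancel₀ hpne, one_mul] at h3
    calc ‖∑ k ∈ range (p ^ m), ((k : ℚ_[p])) ^ n‖ ≤ (p:ℝ) * (p:ℝ) ^ (-(m:ℤ)) := h2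
      _ = (p:ℝ) ^ ((1:ℤ) + -(m:ℤ)) := by rw [zpow_add₀ hpne, zpow_one]
      _ = (p:ℝ) ^ (-(a:ℤ)) := by
          rw [show (1:ℤ) + -(m:ℤ) = -(a:ℤ) from by rw [hm]; push_cast; ring]
  -- bound on the remaining terms
  have hT : ‖∑ i ∈ range n, ((bernoulli i : ℚ) : ℚ_[p]) * ((n + 1).choose i : ℚ_[p])
      * ((p ^ m : ℕ) : ℚ_[p]) ^ (n + 1 - i) / ((n + 1 : ℕ) : ℚ_[p])‖ ≤ (p:ℝ) ^ (-(a:ℤ)) := by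
    refine norm_sum_le_padic (by positivity) ?_
    intro i hi
    rw [mem_range] at hi
    rw [norm_div, norm_mul, norm_mul, norm_pow, hnorm_n1, hnormN]
    have hb : ‖((bernoulli i : ℚ) : ℚ_[p])‖ ≤ (p:ℝ) := IH i hi
    have hch : ‖(((n + 1).choose i : ℕ) : ℚ_[p])‖ ≤ 1 := norm_natCast_le_one _
    have hpow : ((p:ℝ) ^ (-(m:ℤ))) ^ (n + 1 - i) ≤ ((p:ℝ) ^ (-(m:ℤ))) ^ 2 := by
      refine pow_le_pow_of_le_one (by positivity) ?_ (by omega)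
      rw [← zpow_zero (p:ℝ)]
      exact zpow_le_zpow_right₀ (le_of_lt hp1) (by omega)
    have hnum : ‖((bernoulli i : ℚ) : ℚ_[p])‖ * ‖(((n + 1).choose i : ℕ) : ℚ_[p])‖
        * ((p:ℝ) ^ (-(m:ℤ))) ^ (n + 1 - i) ≤ (p:ℝ) * 1 * ((p:ℝ) ^ (-(m:ℤ))) ^ 2 :=
      mul_le_mul (mul_le_mul hb hch (norm_nonneg _) (le_of_lt hp0R)) hpow
        (by positivity) (by positivity)
    have hstep : ‖((bernoulli i : ℚ) : ℚ_[p])‖ * ‖(((n + 1).choose i : ℕ) : ℚ_[p])‖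
          * ((p:ℝ) ^ (-(m:ℤ))) ^ (n + 1 - i) / (p:ℝ) ^ (-(a:ℤ))
        ≤ ((p:ℝ) * 1 * ((p:ℝ) ^ (-(m:ℤ))) ^ 2) / (p:ℝ) ^ (-(a:ℤ)) := by
      rw [div_eq_mul_inv, div_eq_mul_inv]
      exact mul_le_mul_of_nonneg_right hnum (by positivity)
    refine hstep.trans ?_
    have hkey : (p:ℝ) * 1 * ((p:ℝ) ^ (-(m:ℤ))) ^ 2 / (p:ℝ) ^ (-(a:ℤ))
        = (p:ℝ) ^ (-(a:ℤ) - 1) := by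
      rw [mul_one, sq, div_eq_mul_inv, ← zpow_neg, mul_assoc, ← zpow_add₀ hpne,
        ← zpow_add₀ hpne, mul_comm, ← zpow_add_one₀ hpne]
      congr 1
      rw [hm]
      push_cast
      ring
    rw [hkey]
    exact zpow_le_zpow_right₀ (le_of_lt hp1) (by omega)
  -- combine
  have hBN : ‖((bernoulli n : ℚ) : ℚ_[p]) * ((p ^ m : ℕ) : ℚ_[p])‖ ≤ (p:ℝ) ^ (-(a:ℤ)) := by
    have heq : ((bernoulli n : ℚ) : ℚ_[p]) * ((p ^ m : ℕ) : ℚ_[p])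
        = (∑ k ∈ range (p ^ m), ((k : ℚ_[p])) ^ n)
          + -(∑ i ∈ range n, ((bernoulli i : ℚ) : ℚ_[p]) * ((n + 1).choose i : ℚ_[p])
              * ((p ^ m : ℕ) : ℚ_[p]) ^ (n + 1 - i) / ((n + 1 : ℕ) : ℚ_[p])) := by
      linear_combination -hF
    rw [heq]
    refine le_trans (Padic.nonarchimedean _ _) (max_le hS ?_)
    rw [norm_neg]
    exact hT
  rw [norm_mul, hnormN] at hBN
  have h4 := mul_le_mul_of_nonneg_right hBN (le_of_lt (zpow_pos hp0R (m:ℤ)))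
  rw [mul_assoc, ← zpow_add₀ hpne, neg_add_cancel, zpow_zero, mul_one] at h4
  calc ‖((bernoulli n : ℚ) : ℚ_[p])‖ ≤ (p:ℝ) ^ (-(a:ℤ)) * (p:ℝ) ^ (m:ℤ) := h4
    _ = (p:ℝ) ^ ((-(a:ℤ)) + m) := (zpow_add₀ hpne _ _).symm
    _ = (p:ℝ) := by
        rw [show (-(a:ℤ)) + m = 1 from by rw [hm]; push_cast; ring, zpow_one]


lemma norm_dvd_le_inv {k : ℕ} (h : p ∣ k) : ‖((k : ℚ_[p]))‖ ≤ (p:ℝ)⁻¹ := by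
  obtain ⟨d, rfl⟩ := h
  push_cast
  rw [norm_mul, Padic.norm_p]
  calc (p:ℝ)⁻¹ * ‖((d : ℚ_[p]))‖ ≤ (p:ℝ)⁻¹ * 1 :=
        mul_le_mul_of_nonneg_left (norm_natCast_le_one d) (by positivity)
    _ = (p:ℝ)⁻¹ := mul_one _

lemma bernoulli_odd_zero {k : ℕ} (hodd : Odd k) (hk : 1 < k) : bernoulli k = 0 := by
  rw [bernoulli_eq_bernoulli'_of_ne_one (by omega)]
  exact bernoulli'_eq_zero_of_odd hodd hk

/-- last-term simplification of Faulhaber with N = p -/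
lemma faulhaber_peel (n : ℕ) :
    (∑ k ∈ range p, ((k : ℚ_[p])) ^ n)
      = (∑ i ∈ range n, ((bernoulli i : ℚ) : ℚ_[p]) * ((n + 1).choose i : ℚ_[p])
          * (p : ℚ_[p]) ^ (n + 1 - i) / ((n + 1 : ℕ) : ℚ_[p]))
        + ((bernoulli n : ℚ) : ℚ_[p]) * (p : ℚ_[p]) := by
  have hF := faulhaber_padic (p := p) n p
  rw [sum_range_succ] at hF
  have hne' : ((n : ℚ_[p]) + 1) ≠ 0 := by
    exact_mod_cast (Nat.cast_ne_zero (R := ℚ_[p])).mpr (Nat.succ_ne_zero n)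
  have hlast : ((bernoulli n : ℚ) : ℚ_[p]) * ((n + 1).choose n : ℚ_[p])
      * ((p : ℕ) : ℚ_[p]) ^ (n + 1 - n) / ((n + 1 : ℕ) : ℚ_[p])
      = ((bernoulli n : ℚ) : ℚ_[p]) * (p : ℚ_[p]) := by
    rw [Nat.choose_succ_self_right, show n + 1 - n = 1 from by omega, pow_one]
    push_cast
    rw [div_eq_iff hne']
    ring
  rw [hlast] at hF
  exact hF

lemma pinv_cube (hp0R : (0:ℝ) < p) : (1:ℝ) * ((p:ℝ))⁻¹ ^ 3 * (p:ℝ) = (p:ℝ) ^ (-2 : ℤ) := by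
  have hpne : (p:ℝ) ≠ 0 := ne_of_gt hp0R
  rw [show ((-2:ℤ)) = -(2:ℕ) from by norm_num, zpow_neg, zpow_natCast]
  field_simp

/-- key bound, case n = 2(p-1) -/
lemma main2 (hp5 : 5 ≤ p) :
    ∃ w : ℤ_[p], (∑ k ∈ range p, ((k : ℚ_[p])) ^ (2 * (p - 1)))
      = (p : ℚ_[p]) * ((bernoulli (2 * (p - 1)) : ℚ) : ℚ_[p]) + (p : ℚ_[p]) ^ 2 * w := by
  have hp1 : (1:ℝ) < p := by exact_mod_cast hp.out.one_lt
  have hp0R : (0:ℝ) < p := lt_trans one_pos hp1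
  set n := 2 * (p - 1) with hn
  have hF := faulhaber_peel (p := p) n
  have hbound : ‖∑ i ∈ range n, ((bernoulli i : ℚ) : ℚ_[p]) * ((n + 1).choose i : ℚ_[p])
      * (p : ℚ_[p]) ^ (n + 1 - i) / ((n + 1 : ℕ) : ℚ_[p])‖ ≤ (p:ℝ) ^ (-2 : ℤ) := by
    refine norm_sum_le_padic (by positivity) ?_
    intro i hi
    rw [mem_range] at hi
    have hdenom : ‖((n + 1 : ℕ) : ℚ_[p])‖ = 1 := by
      refine norm_natCast_eq_one ?_
      intro hdvd
      have h1 : p ∣ 2 * p - (n + 1) := Nat.dvd_sub ⟨2, by ring⟩ hdvd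
      have h2 : 2 * p - (n + 1) = 1 := by omega
      rw [h2] at h1
      exact hp.out.one_lt.ne' (Nat.dvd_one.mp h1)
    rw [norm_div, hdenom, div_one, norm_mul, norm_mul, norm_pow, Padic.norm_p]
    by_cases hio : i = n - 1
    · have hzero : bernoulli i = 0 := by
        refine bernoulli_odd_zero ?_ (by omega)
        refine ⟨p - 2, by omega⟩
      rw [hzero]
      simp only [Rat.cast_zero, norm_zero, zero_mul, mul_zero]
      positivity
    · have hge : 3 ≤ n + 1 - i := by omega
      have hb : ‖((bernoulli i : ℚ) : ℚ_[p])‖ ≤ (p:ℝ) := bernoulli_norm_le i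
      have hch : ‖(((n + 1).choose i : ℕ) : ℚ_[p])‖ ≤ 1 := norm_natCast_le_one _
      have hpow : ((p:ℝ))⁻¹ ^ (n + 1 - i) ≤ ((p:ℝ))⁻¹ ^ 3 :=
        pow_le_pow_of_le_one (by positivity) (inv_le_one_of_one_le₀ (le_of_lt hp1)) hge
      calc ‖((bernoulli i : ℚ) : ℚ_[p])‖ * ‖(((n + 1).choose i : ℕ) : ℚ_[p])‖
            * ((p:ℝ))⁻¹ ^ (n + 1 - i)
          ≤ (p:ℝ) * 1 * ((p:ℝ))⁻¹ ^ 3 :=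
            mul_le_mul (mul_le_mul hb hch (norm_nonneg _) (le_of_lt hp0R)) hpow
              (by positivity) (by positivity)
        _ = (p:ℝ) ^ (-2 : ℤ) := by rw [← pinv_cube hp0R]; ring
  obtain ⟨w, hw⟩ := exists_padicInt (p := p) 2
    (∑ i ∈ range n, ((bernoulli i : ℚ) : ℚ_[p]) * ((n + 1).choose i : ℚ_[p])
      * (p : ℚ_[p]) ^ (n + 1 - i) / ((n + 1 : ℕ) : ℚ_[p]))
    (by exact_mod_cast hbound)
  exact ⟨w, by linear_combination hF + hw⟩

/-- key bound, case n = p - 1 -/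
lemma main1 (hp5 : 5 ≤ p) :
    ∃ w : ℤ_[p], (∑ k ∈ range p, ((k : ℚ_[p])) ^ (p - 1))
      = (p : ℚ_[p]) * ((bernoulli (p - 1) : ℚ) : ℚ_[p]) + (p : ℚ_[p]) ^ 2 * w := by
  have hp1 : (1:ℝ) < p := by exact_mod_cast hp.out.one_lt
  have hp0R : (0:ℝ) < p := lt_trans one_pos hp1
  have hpmod : p % 2 = 1 := (Nat.Prime.eq_two_or_odd hp.out).resolve_left (by omega)
  set n := p - 1 with hn
  have hn1 : n + 1 = p := by omega
  have hF := faulhaber_peel (p := p) n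
  have hbound : ‖∑ i ∈ range n, ((bernoulli i : ℚ) : ℚ_[p]) * ((n + 1).choose i : ℚ_[p])
      * (p : ℚ_[p]) ^ (n + 1 - i) / ((n + 1 : ℕ) : ℚ_[p])‖ ≤ (p:ℝ) ^ (-2 : ℤ) := by
    refine norm_sum_le_padic (by positivity) ?_
    intro i hi
    rw [mem_range] at hi
    have hdenom : ‖((n + 1 : ℕ) : ℚ_[p])‖ = (p:ℝ)⁻¹ := by
      rw [hn1]
      exact Padic.norm_p
    rw [norm_div, hdenom, norm_mul, norm_mul, norm_pow, Padic.norm_p, div_eq_mul_inv, inv_inv]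
    by_cases hio : i = n - 1
    · have hzero : bernoulli i = 0 := by
        refine bernoulli_odd_zero ?_ (by omega)
        refine ⟨p / 2 - 1, by omega⟩
      rw [hzero]
      simp only [Rat.cast_zero, norm_zero, zero_mul, mul_zero]
      positivity
    · have hge : 3 ≤ n + 1 - i := by omega
      have hbc : ‖((bernoulli i : ℚ) : ℚ_[p])‖ * ‖(((n + 1).choose i : ℕ) : ℚ_[p])‖
          ≤ 1 := by
        rcases Nat.eq_zero_or_pos i with hi0 | hi0
        · subst hi0
          simp only [bernoulli_zero, Rat.cast_one, norm_one, one_mul,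
            Nat.choose_zero_right, Nat.cast_one]
          exact le_refl 1
        · have hdvd : p ∣ (n + 1).choose i := by
            rw [hn1]
            exact hp.out.dvd_choose_self (by omega) (by omega)
          have h1 := bernoulli_norm_le (p := p) i
          have h2 := norm_dvd_le_inv (p := p) hdvd
          calc ‖((bernoulli i : ℚ) : ℚ_[p])‖ * ‖(((n + 1).choose i : ℕ) : ℚ_[p])‖
              ≤ (p:ℝ) * (p:ℝ)⁻¹ :=
                mul_le_mul h1 h2 (norm_nonneg _) (le_of_lt hp0R)
            _ = 1 := mul_inv_cancel₀ (ne_of_gt hp0R)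
      have hpow : ((p:ℝ))⁻¹ ^ (n + 1 - i) ≤ ((p:ℝ))⁻¹ ^ 3 :=
        pow_le_pow_of_le_one (by positivity) (inv_le_one_of_one_le₀ (le_of_lt hp1)) hge
      calc ‖((bernoulli i : ℚ) : ℚ_[p])‖ * ‖(((n + 1).choose i : ℕ) : ℚ_[p])‖
            * ((p:ℝ))⁻¹ ^ (n + 1 - i) * (p:ℝ)
          ≤ 1 * ((p:ℝ))⁻¹ ^ 3 * (p:ℝ) := by
            refine mul_le_mul_of_nonneg_right ?_ (le_of_lt hp0R)
            exact mul_le_mul hbc hpow (by positivity) (by norm_num)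
        _ = (p:ℝ) ^ (-2 : ℤ) := pinv_cube hp0R
  obtain ⟨w, hw⟩ := exists_padicInt (p := p) 2
    (∑ i ∈ range n, ((bernoulli i : ℚ) : ℚ_[p]) * ((n + 1).choose i : ℚ_[p])
      * (p : ℚ_[p]) ^ (n + 1 - i) / ((n + 1 : ℕ) : ℚ_[p]))
    (by exact_mod_cast hbound)
  exact ⟨w, by linear_combination hF + hw⟩

lemma coe_two : ((2 : ℤ_[p]) : ℚ_[p]) = 2 := rfl

lemma padicCoeSum (s : Finset ℕ) (f : ℕ → ℤ_[p]) :
    ((∑ k ∈ s, f k : ℤ_[p]) : ℚ_[p]) = ∑ k ∈ s, ((f k) : ℚ_[p]) :=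
  map_sum (PadicInt.Coe.ringHom) f s

lemma fermat_sums (hp5 : 5 ≤ p) :
    ∃ T V : ℤ_[p],
      (∑ k ∈ range p, ((k : ℤ_[p])) ^ (p - 1)) = ((p : ℤ_[p]) - 1) + p * T ∧
      (∑ k ∈ range p, ((k : ℤ_[p])) ^ (2 * (p - 1)))
        = ((p : ℤ_[p]) - 1) + 2 * p * T + p ^ 2 * V := by
  set d : ℕ → ℤ_[p] := fun k => (k : ℤ_[p]) ^ (p - 1) - 1 with hd
  have hdvd : ∀ k ∈ Ico 1 p, (p : ℤ_[p]) ∣ d k := by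
    intro k hk
    rw [mem_Ico] at hk
    have hk0 : ((k : ℕ) : ZMod p) ≠ 0 := by
      rw [Ne, ZMod.natCast_eq_zero_iff]
      intro hdv
      exact absurd (Nat.le_of_dvd (by omega) hdv) (by omega)
    have h0 : PadicInt.toZMod (d k) = 0 := by
      simp only [hd, map_sub, map_pow, map_natCast, map_one,
        ZMod.pow_card_sub_one_eq_one hk0, sub_self]
    have h1 : d k ∈ RingHom.ker (PadicInt.toZMod (p := p)) := (RingHom.mem_ker).mpr h0
    rw [PadicInt.ker_toZMod, PadicInt.maximalIdeal_eq_span_p,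
      Ideal.mem_span_singleton] at h1
    exact h1
  obtain ⟨T, hT⟩ : (p : ℤ_[p]) ∣ ∑ k ∈ Ico 1 p, d k := Finset.dvd_sum hdvd
  obtain ⟨V, hV⟩ : (p : ℤ_[p]) ^ 2 ∣ ∑ k ∈ Ico 1 p, (d k) ^ 2 := by
    refine Finset.dvd_sum fun k hk => ?_
    obtain ⟨t, ht⟩ := hdvd k hk
    exact ⟨t ^ 2, by rw [ht]; ring⟩
  have hsplit : ∀ f : ℕ → ℤ_[p], ∑ k ∈ range p, f k = f 0 + ∑ k ∈ Ico 1 p, f k := by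
    intro f
    rw [range_eq_Ico]
    exact Finset.sum_eq_sum_Ico_succ_bot hp.out.pos f
  have hd0 : d 0 = -1 := by
    simp only [hd, Nat.cast_zero, zero_pow (show p - 1 ≠ 0 by omega), zero_sub]
  have hD : ∑ k ∈ range p, d k = -1 + (p : ℤ_[p]) * T := by
    rw [hsplit d, hd0, hT]
  have hE : ∑ k ∈ range p, (d k) ^ 2 = 1 + (p : ℤ_[p]) ^ 2 * V := by
    rw [hsplit (fun k => (d k) ^ 2)]
    rw [hd0, hV]
    ring
  have hone : ∀ k : ℕ, (k : ℤ_[p]) ^ (p - 1) = 1 + d k := by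
    intro k; simp [hd]
  have htwo : ∀ k : ℕ, (k : ℤ_[p]) ^ (2 * (p - 1)) = 1 + 2 * d k + (d k) ^ 2 := by
    intro k
    rw [show 2 * (p - 1) = (p - 1) * 2 from by ring, pow_mul, hone k]
    ring
  refine ⟨T, V, ?_, ?_⟩
  · rw [Finset.sum_congr rfl fun k _ => hone k, Finset.sum_add_distrib, sum_const,
      card_range, nsmul_eq_mul, mul_one, hD]
    ring
  · rw [Finset.sum_congr rfl fun k _ => htwo k, Finset.sum_add_distrib,
      Finset.sum_add_distrib, sum_const, card_range, nsmul_eq_mul, mul_one,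
      ← Finset.mul_sum, hD, hE]
    ring

end Aux

theorem stmt_19 (p : ℕ) [hp : Fact p.Prime] (hp5 : 5 ≤ p) :
    (∃ z : ℤ_[p], (p : ℚ_[p]) * (bernoulli (2 * (p - 1)) : ℚ_[p]) =
      -((p : ℚ_[p]) - 1) + 2 * (p : ℚ_[p]) * (bernoulli (p - 1) : ℚ_[p])
      + (p : ℚ_[p]) ^ 2 * z) ∧
    (∀ a b : ℤ,
      (∃ u : ℤ_[p], (p : ℚ_[p]) * (bernoulli (2 * (p - 1)) : ℚ_[p])
        = -1 + (p : ℚ_[p]) * (a : ℚ_[p]) + (p : ℚ_[p]) ^ 2 * u) →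
      (∃ v : ℤ_[p], (p : ℚ_[p]) * (bernoulli (p - 1) : ℚ_[p])
        = -1 + (p : ℚ_[p]) * (b : ℚ_[p]) + (p : ℚ_[p]) ^ 2 * v) →
      a ≡ 2 * b - 1 [ZMOD (p : ℤ)]) := by
  have hp1 : (1:ℝ) < p := by exact_mod_cast hp.out.one_lt
  have hp0R : (0:ℝ) < p := lt_trans one_pos hp1
  have hp0 : (p : ℚ_[p]) ≠ 0 := Nat.cast_ne_zero.mpr hp.out.ne_zero
  obtain ⟨w₁, hw₁⟩ := main1 (p := p) hp5
  obtain ⟨w₂, hw₂⟩ := main2 (p := p) hp5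
  obtain ⟨T, V, hT, hV⟩ := fermat_sums (p := p) hp5
  -- cast fermat sums to ℚ_[p]
  have hcast1 : (∑ k ∈ range p, ((k : ℚ_[p])) ^ (p - 1))
      = ((p : ℚ_[p]) - 1) + (p : ℚ_[p]) * ((T : ℤ_[p]) : ℚ_[p]) := by
    have h := congrArg (fun z : ℤ_[p] => (z : ℚ_[p])) hT
    simp only [padicCoeSum] at h
    push_cast [coe_two] at h
    exact h
  have hcast2 : (∑ k ∈ range p, ((k : ℚ_[p])) ^ (2 * (p - 1)))
      = ((p : ℚ_[p]) - 1) + 2 * (p : ℚ_[p]) * ((T : ℤ_[p]) : ℚ_[p])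
        + (p : ℚ_[p]) ^ 2 * ((V : ℤ_[p]) : ℚ_[p]) := by
    have h := congrArg (fun z : ℤ_[p] => (z : ℚ_[p])) hV
    simp only [padicCoeSum] at h
    push_cast [coe_two] at h
    exact h
  have hmain : (p : ℚ_[p]) * (bernoulli (2 * (p - 1)) : ℚ_[p]) =
      -((p : ℚ_[p]) - 1) + 2 * (p : ℚ_[p]) * (bernoulli (p - 1) : ℚ_[p])
      + (p : ℚ_[p]) ^ 2 * ((2 * w₁ + V - w₂ : ℤ_[p]) : ℚ_[p]) := by
    push_cast [coe_two]
    linear_combination -hw₂ + hcast2 + 2 * hw₁ - 2 * hcast1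
  refine ⟨⟨2 * w₁ + V - w₂, hmain⟩, ?_⟩
  rintro a b ⟨u, hu⟩ ⟨v, hv⟩
  have key : (p : ℚ_[p]) * (((a : ℚ_[p])) - (2 * (b : ℚ_[p]) - 1))
      = (p : ℚ_[p]) * ((p : ℚ_[p]) * ((2 * v + (2 * w₁ + V - w₂) - u : ℤ_[p]) : ℚ_[p])) := by
    push_cast [coe_two] at hmain ⊢
    linear_combination hmain + 2 * hv - hu
  have key2 : ((a : ℚ_[p])) - (2 * (b : ℚ_[p]) - 1)
      = (p : ℚ_[p]) * ((2 * v + (2 * w₁ + V - w₂) - u : ℤ_[p]) : ℚ_[p]) :=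
    mul_left_cancel₀ hp0 key
  have hnorm : ‖((a - (2 * b - 1) : ℤ) : ℚ_[p])‖ < 1 := by
    have hcast : ((a - (2 * b - 1) : ℤ) : ℚ_[p])
        = (p : ℚ_[p]) * ((2 * v + (2 * w₁ + V - w₂) - u : ℤ_[p]) : ℚ_[p]) := by
      push_cast [coe_two] at key2 ⊢
      linear_combination key2
    rw [hcast, norm_mul, Padic.norm_p]
    calc (p:ℝ)⁻¹ * ‖((2 * v + (2 * w₁ + V - w₂) - u : ℤ_[p]) : ℚ_[p])‖
        ≤ (p:ℝ)⁻¹ * 1 := by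
          refine mul_le_mul_of_nonneg_left ?_ (by positivity)
          exact PadicInt.norm_le_one _
      _ < 1 := by
          rw [mul_one]
          exact inv_lt_one_of_one_lt₀ hp1
  have hdvd : (p : ℤ) ∣ (a - (2 * b - 1)) :=
    Padic.norm_intCast_lt_one_iff.mp hnorm
  rw [Int.modEq_iff_dvd]
  have hflip : (2 * b - 1) - a = -(a - (2 * b - 1)) := by ring
  rw [hflip]
  exact dvd_neg.mpr hdvd
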